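/- Let f : [0,1) → [0,∞) be C², with f⁻¹(0) = {0}, such that s ↦ (1-s)f(s) is strictly increasing on (0,1) with limit σ_c > 0 as s → 1⁻, and such that s ↦ (1-s)f'(s)/f(s) is strictly decreasing on (0,1). Then lim_{s→1⁻} (1-s)² f'(s) = σ_c. -/

import Mathlib

open Set Filter

/-- Auxiliary: if `(1-s) f'(s) ≤ c f(s)` on `(s₀,1)`, then `s ↦ f(s)(1-s)^c`
is antitone on `[s₀,1)`. -/
lemma aux_anti (f f' : ℝ → ℝ) (c s0 : ℝ) (h0 : 0 < s0) (h1 : s0 < 1)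
    (hcont : ContinuousOn f (Ico 0 1))
    (hderiv : ∀ s ∈ Ioo (0:ℝ) 1, HasDerivAt f (f' s) s)
    (hb : ∀ s ∈ Ioo s0 1, (1 - s) * f' s ≤ c * f s) :
    ∀ s ∈ Ico s0 1, f s * (1 - s) ^ c ≤ f s0 * (1 - s0) ^ c := by
  have hsub : Ico s0 1 ⊆ Ico (0:ℝ) 1 := Ico_subset_Ico h0.le le_rfl
  have hD : ∀ x ∈ Ioo s0 1, HasDerivAt (fun s => f s * (1 - s) ^ c)
      (f' x * (1 - x) ^ c + f x * (-1 * c * (1 - x) ^ (c - 1))) x := by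
    intro x hx
    have hx01 : x ∈ Ioo (0:ℝ) 1 := ⟨h0.trans hx.1, hx.2⟩
    have hxne : (1 : ℝ) - x ≠ 0 := by have := hx.2; intro h; linarith [sub_eq_zero.mp h]
    have h1x : HasDerivAt (fun s : ℝ => 1 - s) (-1) x := (hasDerivAt_id x).const_sub 1
    have h2 : HasDerivAt (fun s : ℝ => (1 - s) ^ c) (-1 * c * (1 - x) ^ (c - 1)) x :=
      h1x.rpow_const (Or.inl hxne)
    exact (hderiv x hx01).mul h2
  have hmono : AntitoneOn (fun s => f s * (1 - s) ^ c) (Ico s0 1) := by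
    apply antitoneOn_of_deriv_nonpos (convex_Ico s0 1)
    · apply (hcont.mono hsub).mul
      apply ContinuousOn.rpow_const ((continuous_const.sub continuous_id).continuousOn)
      intro x hx
      refine Or.inl ?_
      intro h
      rw [Pi.sub_apply, sub_eq_zero] at h
      simp only [id] at h
      have := hx.2
      linarith
    · rw [interior_Ico]
      intro x hx
      exact ((hD x hx).differentiableAt).differentiableWithinAt
    · rw [interior_Ico]
      intro x hx
      rw [(hD x hx).deriv]
      have hxpos : (0:ℝ) < 1 - x := by have := hx.2; linarith
      have key : f' x * (1 - x) ^ c + f x * (-1 * c * (1 - x) ^ (c - 1))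
          = (1 - x) ^ (c - 1) * ((1 - x) * f' x - c * f x) := by
        have e : (1 - x) ^ c = (1 - x) ^ (c - 1) * (1 - x) := by
          rw [← Real.rpow_add_one (ne_of_gt hxpos) (c - 1)]
          ring_nf
        rw [e]; ring
      rw [key]
      apply mul_nonpos_of_nonneg_of_nonpos (Real.rpow_nonneg hxpos.le _)
      have := hb x hx
      linarith
  intro s hs
  exact hmono (left_mem_Ico.mpr h1) hs hs.1

/-- Auxiliary: if `(1-s) f'(s) ≥ c f(s)` on `(s₀,1)`, then `s ↦ f(s)(1-s)^c`
is monotone on `[s₀,1)`. -/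
lemma aux_mono (f f' : ℝ → ℝ) (c s0 : ℝ) (h0 : 0 < s0) (h1 : s0 < 1)
    (hcont : ContinuousOn f (Ico 0 1))
    (hderiv : ∀ s ∈ Ioo (0:ℝ) 1, HasDerivAt f (f' s) s)
    (hb : ∀ s ∈ Ioo s0 1, c * f s ≤ (1 - s) * f' s) :
    ∀ s ∈ Ico s0 1, f s0 * (1 - s0) ^ c ≤ f s * (1 - s) ^ c := by
  intro s hs
  have := aux_anti (fun x => -f x) (fun x => -f' x) c s0 h0 h1 hcont.neg
    (fun x hx => (hderiv x hx).neg)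
    (fun x hx => by have := hb x hx; simp only [mul_neg]; linarith) s hs
  simp only [neg_mul] at this
  linarith

/-- Under assumptions (f1)-(f4), `lim_{s→1⁻} (1-s)² f'(s) = σ_c`. -/
theorem stmt0 (f f' f'' : ℝ → ℝ) (σc : ℝ) (hσ : 0 < σc)
    (hf_nonneg : ∀ s ∈ Ico (0:ℝ) 1, 0 ≤ f s)
    (hf_zero : ∀ s ∈ Ico (0:ℝ) 1, (f s = 0 ↔ s = 0))
    (hc0 : ContinuousOn f (Ico 0 1))
    (hd1 : ∀ s ∈ Ioo (0:ℝ) 1, HasDerivAt f (f' s) s)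
    (hd2 : ∀ s ∈ Ioo (0:ℝ) 1, HasDerivAt f' (f'' s) s)
    (hc2 : ContinuousOn f'' (Ioo 0 1))
    (hf3 : StrictMonoOn (fun s => (1 - s) * f s) (Ioo 0 1))
    (hf2 : Tendsto (fun s => (1 - s) * f s) (nhdsWithin 1 (Iio 1)) (nhds σc))
    (hf4 : StrictAntiOn (fun s => (1 - s) * f' s / f s) (Ioo 0 1)) :
    Tendsto (fun s => (1 - s) ^ 2 * f' s) (nhdsWithin 1 (Iio 1)) (nhds σc) := by
  -- positivity of f on (0,1)
  have fpos : ∀ s ∈ Ioo (0:ℝ) 1, 0 < f s := by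
    intro s hs
    refine lt_of_le_of_ne (hf_nonneg s ⟨hs.1.le, hs.2⟩) (Ne.symm ?_)
    intro h
    exact absurd ((hf_zero s ⟨hs.1.le, hs.2⟩).mp h) (ne_of_gt hs.1)
  have hIoo : Ioo (0:ℝ) 1 ∈ nhdsWithin (1:ℝ) (Iio 1) :=
    Ioo_mem_nhdsLT_of_mem (by constructor <;> norm_num)
  -- tendsto of (1-s)^p to 0 for p > 0
  have hrp : ∀ p : ℝ, 0 < p →
      Tendsto (fun s : ℝ => (1 - s) ^ p) (nhdsWithin 1 (Iio 1)) (nhds 0) := by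
    intro p hp
    have h1 : Tendsto (fun s : ℝ => 1 - s) (nhdsWithin 1 (Iio 1)) (nhds 0) := by
      have hcts : Continuous (fun s : ℝ => 1 - s) := by continuity
      have h0 : Tendsto (fun s : ℝ => 1 - s) (nhds 1) (nhds 0) := by
        simpa using hcts.tendsto 1
      exact h0.mono_left nhdsWithin_le_nhds
    have h2 := (Real.continuousAt_rpow_const 0 p (Or.inr hp.le)).tendsto.comp h1
    rwa [Real.zero_rpow (ne_of_gt hp)] at h2
  -- g ≤ σc on (0,1)
  have g_le : ∀ s ∈ Ioo (0:ℝ) 1, (1 - s) * f s ≤ σc := by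
    intro s hs
    refine ge_of_tendsto hf2 ?_
    filter_upwards [Ioo_mem_nhdsLT_of_mem (⟨hs.2, le_refl (1:ℝ)⟩ : (1:ℝ) ∈ Ioc s 1)] with t ht
    exact (hf3 hs ⟨hs.1.trans ht.1, ht.2⟩ ht.1).le
  -- h ≥ 1 on (0,1)
  have hA : ∀ s ∈ Ioo (0:ℝ) 1, 1 ≤ (1 - s) * f' s / f s := by
    intro s0 hs0
    by_contra hlt
    push_neg at hlt
    set c := (1 - s0) * f' s0 / f s0 with hc
    have hc1 : c < 1 := hlt
    have hb : ∀ s ∈ Ioo s0 1, (1 - s) * f' s ≤ c * f s := by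
      intro s hs
      have hs01 : s ∈ Ioo (0:ℝ) 1 := ⟨hs0.1.trans hs.1, hs.2⟩
      have := (hf4 hs0 hs01 hs.1).le
      have hfp := fpos s hs01
      calc (1 - s) * f' s = (1 - s) * f' s / f s * f s := by field_simp
        _ ≤ c * f s := by apply mul_le_mul_of_nonneg_right this hfp.le
    have key := aux_anti f f' c s0 hs0.1 hs0.2 hc0 hd1 hb
    -- pick s1 strictly between s0 and 1 for a positive lower bound
    set K := f s0 * (1 - s0) ^ c with hK
    set m := (1 - s0) * f s0 with hm
    have hmpos : 0 < m := mul_pos (by linarith [hs0.2]) (fpos s0 hs0)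
    have hT : Tendsto (fun s : ℝ => K * (1 - s) ^ (1 - c)) (nhdsWithin 1 (Iio 1)) (nhds 0) := by
      simpa using (hrp (1 - c) (by linarith)).const_mul K
    have hev : ∀ᶠ s in nhdsWithin (1:ℝ) (Iio 1), K * (1 - s) ^ (1 - c) < m :=
      hT.eventually ((by exact Filter.Tendsto.eventually_lt_const hmpos tendsto_id))
    have hev2 : Ioo s0 1 ∈ nhdsWithin (1:ℝ) (Iio 1) :=
      Ioo_mem_nhdsLT_of_mem ⟨hs0.2, le_refl (1:ℝ)⟩
    obtain ⟨s, hs1, hs2⟩ := (hev.and (eventually_of_mem hev2 (fun x hx => hx))).exists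
    -- contradiction
    have hs01 : s ∈ Ioo (0:ℝ) 1 := ⟨hs0.1.trans hs2.1, hs2.2⟩
    have hxpos : (0:ℝ) < 1 - s := by linarith [hs2.2]
    have hlow : m ≤ (1 - s) * f s := (hf3 hs0 hs01 hs2.1).le
    have hup : f s * (1 - s) ^ c ≤ K := key s ⟨hs2.1.le, hs2.2⟩
    have hfact : (1 - s) * f s = f s * (1 - s) ^ c * (1 - s) ^ (1 - c) := by
      rw [mul_assoc, ← Real.rpow_add hxpos]
      norm_num [Real.rpow_one]
      ring
    have : (1 - s) * f s ≤ K * (1 - s) ^ (1 - c) := by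
      rw [hfact]
      exact mul_le_mul_of_nonneg_right hup (Real.rpow_nonneg hxpos.le _)
    linarith
  -- for every ε > 0 there is a point with h < 1 + ε
  have hB : ∀ ε : ℝ, 0 < ε → ∃ s ∈ Ioo (0:ℝ) 1, (1 - s) * f' s / f s < 1 + ε := by
    intro ε hε
    by_contra hcon
    push_neg at hcon
    have hb : ∀ s ∈ Ioo (1/2 : ℝ) 1, (1 + ε) * f s ≤ (1 - s) * f' s := by
      intro s hs
      have hs01 : s ∈ Ioo (0:ℝ) 1 := ⟨by linarith [hs.1], hs.2⟩
      have := hcon s hs01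
      have hfp := fpos s hs01
      calc (1 + ε) * f s ≤ (1 - s) * f' s / f s * f s :=
            mul_le_mul_of_nonneg_right this hfp.le
        _ = (1 - s) * f' s := by field_simp
    have key := aux_mono f f' (1 + ε) (1/2) (by norm_num) (by norm_num) hc0 hd1 hb
    set m := f (1/2) * (1 - 1/2 : ℝ) ^ (1 + ε) with hm
    have hmpos : 0 < m := by
      apply mul_pos (fpos (1/2) (by norm_num))
      apply Real.rpow_pos_of_pos; norm_num
    have hT : Tendsto (fun s : ℝ => σc * (1 - s) ^ ε) (nhdsWithin 1 (Iio 1)) (nhds 0) := by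
      simpa using (hrp ε hε).const_mul σc
    have hev : ∀ᶠ s in nhdsWithin (1:ℝ) (Iio 1), σc * (1 - s) ^ ε < m :=
      hT.eventually ((by exact Filter.Tendsto.eventually_lt_const hmpos tendsto_id))
    have hev2 : Ioo (1/2:ℝ) 1 ∈ nhdsWithin (1:ℝ) (Iio 1) :=
      Ioo_mem_nhdsLT_of_mem (by constructor <;> norm_num)
    obtain ⟨s, hs1, hs2⟩ := (hev.and (eventually_of_mem hev2 (fun x hx => hx))).exists
    have hs01 : s ∈ Ioo (0:ℝ) 1 := ⟨by linarith [hs2.1], hs2.2⟩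
    have hxpos : (0:ℝ) < 1 - s := by linarith [hs2.2]
    have hlow : m ≤ f s * (1 - s) ^ (1 + ε) := key s ⟨hs2.1.le, hs2.2⟩
    have hfact : f s * (1 - s) ^ (1 + ε) = (1 - s) * f s * (1 - s) ^ ε := by
      rw [Real.rpow_add hxpos, Real.rpow_one]; ring
    have hgle := g_le s hs01
    have : f s * (1 - s) ^ (1 + ε) ≤ σc * (1 - s) ^ ε := by
      rw [hfact]
      exact mul_le_mul_of_nonneg_right hgle (Real.rpow_nonneg hxpos.le _)
    linarith
  -- h → 1
  have h_tendsto : Tendsto (fun s => (1 - s) * f' s / f s) (nhdsWithin 1 (Iio 1)) (nhds 1) := by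
    rw [tendsto_order]
    constructor
    · intro a ha
      filter_upwards [hIoo] with s hs
      exact lt_of_lt_of_le ha (hA s hs)
    · intro a ha
      obtain ⟨s0, hs0, hs0lt⟩ := hB (a - 1) (by linarith)
      have : (1 - s0) * f' s0 / f s0 < a := by linarith
      filter_upwards [Ioo_mem_nhdsLT_of_mem (⟨hs0.2, le_refl (1:ℝ)⟩ : (1:ℝ) ∈ Ioc s0 1)]
        with s hs
      have hs01 : s ∈ Ioo (0:ℝ) 1 := ⟨hs0.1.trans hs.1, hs.2⟩
      exact lt_trans (hf4 hs0 hs01 hs.1) this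
  -- conclude
  have := hf2.mul h_tendsto
  rw [mul_one] at this
  refine this.congr' ?_
  filter_upwards [hIoo] with s hs
  have hfp := (fpos s hs).ne'
  field_simp
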